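/- Let g ∈ C²([−1,1]) with ‖g^{(r)}‖_{L∞([−1,1])} ≤ B for r = 0,1,2, and assume g'(ρ) = 0 for some ρ ∈ [0,1/2]. Let {z_j}_{j=0}^{2m} be the partition of [−1,1] with z_0 = −1, z_m = ρ, z_{2m} = 1, z_{j+1} − z_j = h_1 = (ρ+1)/m for 0 ≤ j ≤ m−1 and z_{j+1} − z_j = h_2 = (1−ρ)/m for m ≤ j ≤ 2m−1. Then there exists a two-layer ReLU network g_m(z) = c + Σ_{i=1}^{2m} a_i·ReLU(ε_i z − b_i) on [−1,1], with c = g(ρ), b_i ∈ [−1,1] and ε_i ∈ {±1}, such that ‖g − g_m‖_{W^{1,∞}([−1,1])} ≤ 2B/m; moreover |c| ≤ B, |a_i| ≤ 2Bh_1 for i < m, |a_m| ≤ Bh_1, |a_{m+1}| ≤ Bh_2, |a_i| ≤ 2Bh_2 for i > m+1, so that Σ_{i=1}^{2m}|a_i| ≤ 4B. -/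

import Mathlib

open Real Set

noncomputable section

/-- The ReLU activation. -/
def relu (z : ℝ) : ℝ := max z 0

set_option maxHeartbeats 2000000

section
open Finset

lemma relu_of_nonpos {x : ℝ} (h : x ≤ 0) : relu x = 0 := max_eq_right h
lemma relu_of_nonneg {x : ℝ} (h : 0 ≤ x) : relu x = x := max_eq_left h

/-- Glue Lipschitz bounds on adjacent intervals. -/
lemma lip_glue {f : ℝ → ℝ} {C x₀ x₁ x₂ : ℝ}
    (H1 : ∀ x ∈ Icc x₀ x₁, ∀ y ∈ Icc x₀ x₁, |f y - f x| ≤ C * |y - x|)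
    (H2 : ∀ x ∈ Icc x₁ x₂, ∀ y ∈ Icc x₁ x₂, |f y - f x| ≤ C * |y - x|)
    (h01 : x₀ ≤ x₁) (h12 : x₁ ≤ x₂) :
    ∀ x ∈ Icc x₀ x₂, ∀ y ∈ Icc x₀ x₂, |f y - f x| ≤ C * |y - x| := by
  have key : ∀ x ∈ Icc x₀ x₂, ∀ y ∈ Icc x₀ x₂, x ≤ y → |f y - f x| ≤ C * |y - x| := by
    intro x hx y hy hxy
    rcases le_total y x₁ with h | h
    · exact H1 x ⟨hx.1, le_trans hxy h⟩ y ⟨hy.1, h⟩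
    · rcases le_total x₁ x with h' | h'
      · exact H2 x ⟨h', hx.2⟩ y ⟨le_trans h' hxy, hy.2⟩
      · have e1 := H1 x ⟨hx.1, h'⟩ x₁ ⟨h01, le_refl _⟩
        have e2 := H2 x₁ ⟨le_refl _, h12⟩ y ⟨h, hy.2⟩
        have : |f y - f x| ≤ |f y - f x₁| + |f x₁ - f x| := abs_sub_le _ _ _
        have hxx : |x₁ - x| = x₁ - x := abs_of_nonneg (by linarith)
        have hyy : |y - x₁| = y - x₁ := abs_of_nonneg (by linarith)
        have hyx : |y - x| = y - x := abs_of_nonneg (by linarith)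
        rw [hxx] at e1; rw [hyy] at e2; rw [hyx]
        calc |f y - f x| ≤ |f y - f x₁| + |f x₁ - f x| := this
          _ ≤ C * (y - x₁) + C * (x₁ - x) := by linarith
          _ = C * (y - x) := by ring
  intro x hx y hy
  rcases le_total x y with h | h
  · exact key x hx y hy h
  · have := key y hy x hx h
    rw [abs_sub_comm (f y), abs_sub_comm y]; exact this

/-- Bound `derivWithin` by a Lipschitz constant. -/
lemma abs_derivWithin_le_of_lip {f : ℝ → ℝ} {C z : ℝ}
    (hz : z ∈ Icc (-1:ℝ) 1)
    (hd : DifferentiableWithinAt ℝ f (Icc (-1:ℝ) 1) z)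
    (hlip : ∀ y ∈ Icc (-1:ℝ) 1, |f y - f z| ≤ C * |y - z|) :
    |derivWithin f (Icc (-1:ℝ) 1) z| ≤ C := by
  have hdd := hd.hasDerivWithinAt
  rw [hasDerivWithinAt_iff_tendsto_slope] at hdd
  -- choose a one-sided interval inside `Icc \ {z}`
  obtain ⟨S, hSsub, hSne⟩ :
      ∃ S : Set ℝ, S ⊆ Icc (-1:ℝ) 1 \ {z} ∧ Filter.NeBot (nhdsWithin z S) := by
    rcases lt_or_ge z 1 with h | h
    · refine ⟨Ioo z 1, ?_, left_nhdsWithin_Ioo_neBot h⟩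
      intro y hy; exact ⟨⟨by linarith [hz.1, hy.1], le_of_lt hy.2⟩, by simp [ne_of_gt hy.1]⟩
    · have hz1 : z = 1 := le_antisymm hz.2 h
      refine ⟨Ioo (-1:ℝ) z, ?_, right_nhdsWithin_Ioo_neBot (by rw [hz1]; norm_num)⟩
      intro y hy; exact ⟨⟨le_of_lt hy.1, by linarith [hz.2, hy.2]⟩, by simp [ne_of_lt hy.2]⟩
  have hmono : nhdsWithin z S ≤ nhdsWithin z (Icc (-1:ℝ) 1 \ {z}) := nhdsWithin_mono _ hSsub
  have hdd' := hdd.mono_left hmono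
  have habs : Filter.Tendsto (fun y => |slope f z y|) (nhdsWithin z S)
      (nhds |derivWithin f (Icc (-1:ℝ) 1) z|) := hdd'.abs
  haveI := hSne
  refine le_of_tendsto habs ?_
  filter_upwards [self_mem_nhdsWithin] with y hy
  have hy' : y ∈ Icc (-1:ℝ) 1 \ {z} := hSsub hy
  have hyne : y ≠ z := by simpa using hy'.2
  rw [slope_def_field]
  rw [div_eq_mul_inv, abs_mul, abs_inv]
  have h0 : 0 < |y - z| := abs_pos.2 (sub_ne_zero.2 hyne)
  calc |f y - f z| * |y - z|⁻¹ ≤ (C * |y - z|) * |y - z|⁻¹ := by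
        apply mul_le_mul_of_nonneg_right (hlip y hy'.1) (by positivity)
    _ = C := by field_simp

namespace T18

/-- grid point `ρ + j h` -/
def Qp (ρ h : ℝ) (j : ℕ) : ℝ := ρ + j * h

/-- slope sequence: `Tf G' ρ h (j+1) = G' (ρ + (j+1/2) h)`, `Tf _ _ _ 0 = 0`. -/
def Tf (G' : ℝ → ℝ) (ρ h : ℝ) : ℕ → ℝ
  | 0 => 0
  | j+1 => G' (ρ + ((j : ℝ) + 1/2) * h)

variable (G' : ℝ → ℝ) (ρ h₁ h₂ : ℝ) (m : ℕ)

def a (i : ℕ) : ℝ :=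
  if i < m then Tf G' ρ (-h₁) (m-1-i) - Tf G' ρ (-h₁) (m-i)
  else Tf G' ρ h₂ (i-m+1) - Tf G' ρ h₂ (i-m)

def b (i : ℕ) : ℝ := if i < m then -(Qp ρ (-h₁) (m-1-i)) else Qp ρ h₂ (i-m)

def e (i : ℕ) : ℝ := if i < m then -1 else 1

def F (z : ℝ) : ℝ := ∑ i ∈ range (2*m), a G' ρ h₁ h₂ m i * relu (e m i * z - b ρ h₁ h₂ m i)

/-- On the right cell `[Q k, Q (k+1)]`, `F` has derivative `Tf G' ρ h₂ (k+1)`. -/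
lemma cellR (h1p : 0 ≤ h₁) (h2p : 0 ≤ h₂) {k : ℕ} (hk : k < m)
    {x : ℝ} (hx : x ∈ Icc (Qp ρ h₂ k) (Qp ρ h₂ (k+1))) :
    HasDerivWithinAt (F G' ρ h₁ h₂ m) (Tf G' ρ h₂ (k+1))
      (Icc (Qp ρ h₂ k) (Qp ρ h₂ (k+1))) x := by
  set cell := Icc (Qp ρ h₂ k) (Qp ρ h₂ (k+1)) with hcell
  have hQmono : ∀ {j j' : ℕ}, j ≤ j' → Qp ρ h₂ j ≤ Qp ρ h₂ j' := by
    intro j j' hj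
    simp only [Qp]
    have : (j:ℝ) ≤ (j':ℝ) := Nat.cast_le.2 hj
    nlinarith
  have hQx : ∀ {j : ℕ}, j ≤ k → Qp ρ h₂ j ≤ x := fun hj => le_trans (hQmono hj) hx.1
  have hxQ : ∀ {j : ℕ}, k + 1 ≤ j → x ≤ Qp ρ h₂ j := fun hj => le_trans hx.2 (hQmono hj)
  have hPle : ∀ j : ℕ, Qp ρ (-h₁) j ≤ x := by
    intro j
    have : Qp ρ (-h₁) j ≤ ρ := by
      simp only [Qp]
      have : (0:ℝ) ≤ (j:ℝ) * h₁ := by positivity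
      nlinarith
    have : Qp ρ (-h₁) j ≤ Qp ρ h₂ 0 := by simpa [Qp] using this
    exact le_trans this (hQx (Nat.zero_le k))
  -- derivative of each summand
  have key : HasDerivWithinAt (F G' ρ h₁ h₂ m)
      (∑ i ∈ range (2*m), (if i < m then 0 else
        if i - m ≤ k then a G' ρ h₁ h₂ m i else 0)) cell x := by
    apply HasDerivWithinAt.fun_sum
    intro i _
    rcases lt_or_ge i m with him | him
    · rw [if_pos him]
      refine (hasDerivWithinAt_const x cell (0:ℝ)).congr ?_ ?_ |>.congr_deriv (by ring)
      · intro u hu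
        have : e m i * u - b ρ h₁ h₂ m i ≤ 0 := by
          simp only [e, b, if_pos him]
          have := hPle (m-1-i)
          -- u ≥ Qp ρ (-h₁) (m-1-i) needed: u ∈ cell so u ≥ Q k ≥ ρ ≥ P j
          have hu1 : Qp ρ (-h₁) (m-1-i) ≤ u := by
            have h1 : Qp ρ (-h₁) (m-1-i) ≤ ρ := by
              simp only [Qp]
              have : (0:ℝ) ≤ ((m-1-i:ℕ):ℝ) * h₁ := by positivity
              nlinarith
            have h2 : ρ ≤ Qp ρ h₂ k := by
              simp only [Qp]; have : (0:ℝ) ≤ (k:ℝ) * h₂ := by positivity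
              nlinarith
            exact le_trans h1 (le_trans h2 hu.1)
          linarith
        rw [relu_of_nonpos this, mul_zero]
      · have : e m i * x - b ρ h₁ h₂ m i ≤ 0 := by
          simp only [e, b, if_pos him]
          have hu1 : Qp ρ (-h₁) (m-1-i) ≤ x := hPle _
          linarith
        rw [relu_of_nonpos this, mul_zero]
    · rw [if_neg (not_lt.2 him)]
      rcases le_or_gt (i - m) k with hik | hik
      · rw [if_pos hik]
        have haff : HasDerivWithinAt (fun u => a G' ρ h₁ h₂ m i * (u - Qp ρ h₂ (i-m)))
            (a G' ρ h₁ h₂ m i) cell x := by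
          simpa using ((hasDerivWithinAt_id x cell).sub_const (Qp ρ h₂ (i-m))).const_mul
            (a G' ρ h₁ h₂ m i)
        refine haff.congr ?_ ?_
        · intro u hu
          have : 0 ≤ e m i * u - b ρ h₁ h₂ m i := by
            simp only [e, b, if_neg (not_lt.2 him)]
            have := le_trans (hQmono hik) hu.1
            linarith
          rw [relu_of_nonneg this]
          simp only [e, b, if_neg (not_lt.2 him)]; ring
        · have : 0 ≤ e m i * x - b ρ h₁ h₂ m i := by
            simp only [e, b, if_neg (not_lt.2 him)]
            have := hQx hik
            linarith
          rw [relu_of_nonneg this]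
          simp only [e, b, if_neg (not_lt.2 him)]; ring
      · rw [if_neg (not_le.2 hik)]
        refine (hasDerivWithinAt_const x cell (0:ℝ)).congr ?_ ?_ |>.congr_deriv (by ring)
        · intro u hu
          have : e m i * u - b ρ h₁ h₂ m i ≤ 0 := by
            simp only [e, b, if_neg (not_lt.2 him)]
            have := le_trans hu.2 (hQmono hik)
            linarith
          rw [relu_of_nonpos this, mul_zero]
        · have : e m i * x - b ρ h₁ h₂ m i ≤ 0 := by
            simp only [e, b, if_neg (not_lt.2 him)]
            have := hxQ hik
            linarith
          rw [relu_of_nonpos this, mul_zero]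
  convert key using 1
  -- telescoping sum
  have : ∀ i ∈ range (2*m), (if i < m then (0:ℝ) else if i - m ≤ k then a G' ρ h₁ h₂ m i else 0)
      = Tf G' ρ h₂ (min (i+1-m) (k+1)) - Tf G' ρ h₂ (min (i-m) (k+1)) := by
    intro i _
    rcases lt_or_ge i m with him | him
    · rw [if_pos him]
      have e1 : i+1-m ≤ m - m := by omega
      have : min (i+1-m) (k+1) = min (i-m) (k+1) := by omega
      rw [this]; ring
    · rw [if_neg (not_lt.2 him), a, if_neg (not_lt.2 him)]
      rcases le_or_gt (i-m) k with hik | hik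
      · rw [if_pos hik]
        have e1 : min (i+1-m) (k+1) = i-m+1 := by omega
        have e2 : min (i-m) (k+1) = i-m := by omega
        rw [e1, e2]
      · rw [if_neg (not_le.2 hik)]
        have e1 : min (i+1-m) (k+1) = k+1 := by omega
        have e2 : min (i-m) (k+1) = k+1 := by omega
        rw [e1, e2]; ring
  rw [Finset.sum_congr rfl this, Finset.sum_range_sub (fun i => Tf G' ρ h₂ (min (i-m) (k+1)))]
  have e1 : min (2*m-m) (k+1) = k+1 := by omega
  have e2 : min (0-m) (k+1) = 0 := by omega
  rw [e1, e2]
  simp [Tf]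


/-- On the left cell `[P (k+1), P k]`, `F` has derivative `Tf G' ρ (-h₁) (k+1)`. -/
lemma cellL (h1p : 0 ≤ h₁) (h2p : 0 ≤ h₂) {k : ℕ} (hk : k < m)
    {x : ℝ} (hx : x ∈ Icc (Qp ρ (-h₁) (k+1)) (Qp ρ (-h₁) k)) :
    HasDerivWithinAt (F G' ρ h₁ h₂ m) (Tf G' ρ (-h₁) (k+1))
      (Icc (Qp ρ (-h₁) (k+1)) (Qp ρ (-h₁) k)) x := by
  set cell := Icc (Qp ρ (-h₁) (k+1)) (Qp ρ (-h₁) k) with hcell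
  have hPanti : ∀ {j j' : ℕ}, j ≤ j' → Qp ρ (-h₁) j' ≤ Qp ρ (-h₁) j := by
    intro j j' hj
    simp only [Qp]
    have : (j:ℝ) ≤ (j':ℝ) := Nat.cast_le.2 hj
    nlinarith
  have hPx : ∀ {j : ℕ}, j ≤ k → x ≤ Qp ρ (-h₁) j := fun hj => le_trans hx.2 (hPanti hj)
  have hxP : ∀ {j : ℕ}, k + 1 ≤ j → Qp ρ (-h₁) j ≤ x := fun hj => le_trans (hPanti hj) hx.1
  have hQge : ∀ (j : ℕ) {u : ℝ}, u ∈ cell → u ≤ Qp ρ h₂ j := by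
    intro j u hu
    have h1 : u ≤ ρ := by
      have := le_trans hu.2 (hPanti (Nat.zero_le k))
      simpa [Qp] using this
    have : ρ ≤ Qp ρ h₂ j := by
      simp only [Qp]; have : (0:ℝ) ≤ (j:ℝ) * h₂ := by positivity
      nlinarith
    linarith
  have key : HasDerivWithinAt (F G' ρ h₁ h₂ m)
      (∑ i ∈ range (2*m), (if i < m then
        (if m-1-i ≤ k then Tf G' ρ (-h₁) (m-i) - Tf G' ρ (-h₁) (m-1-i) else 0) else 0)) cell x := by
    apply HasDerivWithinAt.fun_sum
    intro i _
    rcases lt_or_ge i m with him | him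
    · rw [if_pos him]
      rcases le_or_gt (m-1-i) k with hik | hik
      · rw [if_pos hik]
        -- active: relu (-u + P (m-1-i)) = P (m-1-i) - u
        have haff : HasDerivWithinAt
            (fun u => a G' ρ h₁ h₂ m i * (Qp ρ (-h₁) (m-1-i) - u))
            (a G' ρ h₁ h₂ m i * (-1)) cell x := by
          simpa using ((hasDerivWithinAt_id x cell).const_sub (Qp ρ (-h₁) (m-1-i))).const_mul
            (a G' ρ h₁ h₂ m i)
        have hval : a G' ρ h₁ h₂ m i * (-1)
            = Tf G' ρ (-h₁) (m-i) - Tf G' ρ (-h₁) (m-1-i) := by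
          rw [a, if_pos him]; ring
        rw [← hval]
        refine haff.congr ?_ ?_
        · intro u hu
          have hle : 0 ≤ e m i * u - b ρ h₁ h₂ m i := by
            simp only [e, b, if_pos him]
            have : u ≤ Qp ρ (-h₁) (m-1-i) := le_trans hu.2 (hPanti hik)
            linarith
          rw [relu_of_nonneg hle]
          simp only [e, b, if_pos him]; ring
        · have hle : 0 ≤ e m i * x - b ρ h₁ h₂ m i := by
            simp only [e, b, if_pos him]
            have : x ≤ Qp ρ (-h₁) (m-1-i) := hPx hik
            linarith
          rw [relu_of_nonneg hle]
          simp only [e, b, if_pos him]; ring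
      · rw [if_neg (not_le.2 hik)]
        refine (hasDerivWithinAt_const x cell (0:ℝ)).congr ?_ ?_ |>.congr_deriv (by ring)
        · intro u hu
          have hle : e m i * u - b ρ h₁ h₂ m i ≤ 0 := by
            simp only [e, b, if_pos him]
            have : Qp ρ (-h₁) (m-1-i) ≤ u := le_trans (hPanti hik) hu.1
            linarith
          rw [relu_of_nonpos hle, mul_zero]
        · have hle : e m i * x - b ρ h₁ h₂ m i ≤ 0 := by
            simp only [e, b, if_pos him]
            have : Qp ρ (-h₁) (m-1-i) ≤ x := hxP hik
            linarith
          rw [relu_of_nonpos hle, mul_zero]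
    · rw [if_neg (not_lt.2 him)]
      refine (hasDerivWithinAt_const x cell (0:ℝ)).congr ?_ ?_ |>.congr_deriv (by ring)
      · intro u hu
        have hle : e m i * u - b ρ h₁ h₂ m i ≤ 0 := by
          simp only [e, b, if_neg (not_lt.2 him)]
          have := hQge (i-m) hu
          linarith
        rw [relu_of_nonpos hle, mul_zero]
      · have hle : e m i * x - b ρ h₁ h₂ m i ≤ 0 := by
          simp only [e, b, if_neg (not_lt.2 him)]
          have := hQge (i-m) hx
          linarith
        rw [relu_of_nonpos hle, mul_zero]
  convert key using 1
  have hpt : ∀ i ∈ range (2*m), (if i < m then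
      (if m-1-i ≤ k then Tf G' ρ (-h₁) (m-i) - Tf G' ρ (-h₁) (m-1-i) else 0) else 0)
      = (Tf G' ρ (-h₁) (k+1) - Tf G' ρ (-h₁) (min (m-(i+1)) (k+1)))
        - (Tf G' ρ (-h₁) (k+1) - Tf G' ρ (-h₁) (min (m-i) (k+1))) := by
    intro i _
    rcases lt_or_ge i m with him | him
    · rw [if_pos him]
      rcases le_or_gt (m-1-i) k with hik | hik
      · rw [if_pos hik]
        have e1 : min (m-(i+1)) (k+1) = m-1-i := by omega
        have e2 : min (m-i) (k+1) = m-i := by omega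
        rw [e1, e2]; ring
      · rw [if_neg (not_le.2 hik)]
        have e1 : min (m-(i+1)) (k+1) = k+1 := by omega
        have e2 : min (m-i) (k+1) = k+1 := by omega
        rw [e1, e2]; ring
    · rw [if_neg (not_lt.2 him)]
      have e1 : min (m-(i+1)) (k+1) = 0 := by omega
      have e2 : min (m-i) (k+1) = 0 := by omega
      rw [e1, e2]; ring
  rw [Finset.sum_congr rfl hpt,
    Finset.sum_range_sub (fun i => Tf G' ρ (-h₁) (k+1) - Tf G' ρ (-h₁) (min (m-i) (k+1)))]
  have e1 : min (m-2*m) (k+1) = 0 := by omega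
  have e2 : min (m-0) (k+1) = k+1 := by omega
  rw [e1, e2]
  simp [Tf]

/-- Core analytic lemma: `g - g_m` is `C`-Lipschitz on `[-1,1]`. -/
lemma glip (g : ℝ → ℝ) (B C : ℝ)
    (hg : ∀ x ∈ Icc (-1:ℝ) 1, HasDerivWithinAt g (G' x) (Icc (-1:ℝ) 1) x)
    (lip : ∀ x ∈ Icc (-1:ℝ) 1, ∀ y ∈ Icc (-1:ℝ) 1, |G' y - G' x| ≤ B * |y - x|)
    (hρ0 : 0 ≤ ρ) (hρ2 : ρ ≤ 1/2) (hB : 0 < B) (h1p : 0 < h₁) (h2p : 0 < h₂)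
    (hmh1 : (m:ℝ) * h₁ = ρ + 1) (hmh2 : (m:ℝ) * h₂ = 1 - ρ)
    (hC1 : B * h₁ / 2 ≤ C) (hC2 : B * h₂ / 2 ≤ C) :
    ∀ x ∈ Icc (-1:ℝ) 1, ∀ y ∈ Icc (-1:ℝ) 1,
      |(g y - (g ρ + F G' ρ h₁ h₂ m y)) - (g x - (g ρ + F G' ρ h₁ h₂ m x))|
        ≤ C * |y - x| := by
  have hCpos : 0 < C := lt_of_lt_of_le (by positivity) hC1
  have hQm : Qp ρ h₂ m = 1 := by simp only [Qp]; linarith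
  have hPm : Qp ρ (-h₁) m = -1 := by
    simp only [Qp, mul_neg]; linarith
  have hQmono : ∀ {j j' : ℕ}, j ≤ j' → Qp ρ h₂ j ≤ Qp ρ h₂ j' := by
    intro j j' hj
    simp only [Qp]
    have : (j:ℝ) ≤ (j':ℝ) := Nat.cast_le.2 hj
    nlinarith
  have hPanti : ∀ {j j' : ℕ}, j ≤ j' → Qp ρ (-h₁) j' ≤ Qp ρ (-h₁) j := by
    intro j j' hj
    simp only [Qp, mul_neg]
    have : (j:ℝ) ≤ (j':ℝ) := Nat.cast_le.2 hj
    nlinarith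
  have hQ0 : Qp ρ h₂ 0 = ρ := by simp [Qp]
  have hP0 : Qp ρ (-h₁) 0 = ρ := by simp [Qp]
  have hQI : ∀ {j : ℕ}, j ≤ m → Qp ρ h₂ j ∈ Icc (-1:ℝ) 1 := by
    intro j hj
    rw [Set.mem_Icc]
    refine ⟨?_, by rw [← hQm]; exact hQmono hj⟩
    have h0 : Qp ρ h₂ 0 ≤ Qp ρ h₂ j := hQmono (Nat.zero_le j)
    rw [hQ0] at h0; linarith
  have hPI : ∀ {j : ℕ}, j ≤ m → Qp ρ (-h₁) j ∈ Icc (-1:ℝ) 1 := by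
    intro j hj
    rw [Set.mem_Icc]
    refine ⟨by rw [← hPm]; exact hPanti hj, ?_⟩
    have h0 : Qp ρ (-h₁) j ≤ Qp ρ (-h₁) 0 := hPanti (Nat.zero_le j)
    rw [hP0] at h0; linarith
  have hm0 : (0:ℝ) < m := by
    by_contra h
    push_neg at h
    have : (m:ℝ) = 0 := le_antisymm h (Nat.cast_nonneg m)
    rw [this] at hmh1; nlinarith
  have hmidR : ∀ {j : ℕ}, j < m → ρ + ((j:ℝ) + 1/2) * h₂ ∈ Icc (-1:ℝ) 1 := by
    intro j hj
    have hj' : (j:ℝ) + 1 ≤ (m:ℝ) := by exact_mod_cast Nat.succ_le_of_lt hj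
    have hj0 : (0:ℝ) ≤ (j:ℝ) := Nat.cast_nonneg j
    rw [Set.mem_Icc]
    constructor <;> nlinarith
  have hmidL : ∀ {j : ℕ}, j < m → ρ + ((j:ℝ) + 1/2) * (-h₁) ∈ Icc (-1:ℝ) 1 := by
    intro j hj
    have hj' : (j:ℝ) + 1 ≤ (m:ℝ) := by exact_mod_cast Nat.succ_le_of_lt hj
    have hj0 : (0:ℝ) ≤ (j:ℝ) := Nat.cast_nonneg j
    rw [Set.mem_Icc]
    constructor <;> nlinarith
  -- Lipschitz estimate on a right cell
  have lipR : ∀ {k : ℕ}, k < m →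
      ∀ x ∈ Icc (Qp ρ h₂ k) (Qp ρ h₂ (k+1)), ∀ y ∈ Icc (Qp ρ h₂ k) (Qp ρ h₂ (k+1)),
        |(g y - (g ρ + F G' ρ h₁ h₂ m y)) - (g x - (g ρ + F G' ρ h₁ h₂ m x))|
          ≤ C * |y - x| := by
    intro k hk x hx y hy
    have hsub : Icc (Qp ρ h₂ k) (Qp ρ h₂ (k+1)) ⊆ Icc (-1:ℝ) 1 := by
      apply Set.Icc_subset_Icc
      · exact (hQI (le_of_lt hk)).1
      · exact (hQI hk).2
    have hder : ∀ u ∈ Icc (Qp ρ h₂ k) (Qp ρ h₂ (k+1)),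
        HasDerivWithinAt (fun v => g v - (g ρ + F G' ρ h₁ h₂ m v))
          (G' u - Tf G' ρ h₂ (k+1)) (Icc (Qp ρ h₂ k) (Qp ρ h₂ (k+1))) u := by
      intro u hu
      have h1 := ((hg u (hsub hu)).mono hsub)
      have h2 := (cellR G' ρ h₁ h₂ m (le_of_lt h1p) (le_of_lt h2p) hk hu).const_add (g ρ)
      exact h1.sub h2
    have hbound : ∀ u ∈ Icc (Qp ρ h₂ k) (Qp ρ h₂ (k+1)),
        ‖G' u - Tf G' ρ h₂ (k+1)‖ ≤ C := by
      intro u hu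
      rw [Real.norm_eq_abs]
      have hmid : ρ + ((k:ℝ) + 1/2) * h₂ ∈ Icc (-1:ℝ) 1 := hmidR hk
      have : Tf G' ρ h₂ (k+1) = G' (ρ + ((k:ℝ) + 1/2) * h₂) := by simp [Tf]
      rw [this]
      have hl := lip _ hmid u (hsub hu)
      have hdist : |u - (ρ + ((k:ℝ) + 1/2) * h₂)| ≤ h₂ / 2 := by
        rw [abs_le]
        have h1 : Qp ρ h₂ k ≤ u := hu.1
        have h2 : u ≤ Qp ρ h₂ (k+1) := hu.2
        simp only [Qp] at h1 h2
        push_cast at h2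
        constructor <;> nlinarith
      calc |G' u - G' (ρ + ((k:ℝ) + 1/2) * h₂)| ≤ B * |u - (ρ + ((k:ℝ) + 1/2) * h₂)| := hl
        _ ≤ B * (h₂ / 2) := by nlinarith [abs_nonneg (u - (ρ + ((k:ℝ) + 1/2) * h₂))]
        _ ≤ C := by linarith
    have := (convex_Icc (Qp ρ h₂ k) (Qp ρ h₂ (k+1))).norm_image_sub_le_of_norm_hasDerivWithin_le hder hbound hx hy
    simpa [Real.norm_eq_abs] using this
  -- Lipschitz estimate on a left cell
  have lipL : ∀ {k : ℕ}, k < m →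
      ∀ x ∈ Icc (Qp ρ (-h₁) (k+1)) (Qp ρ (-h₁) k), ∀ y ∈ Icc (Qp ρ (-h₁) (k+1)) (Qp ρ (-h₁) k),
        |(g y - (g ρ + F G' ρ h₁ h₂ m y)) - (g x - (g ρ + F G' ρ h₁ h₂ m x))|
          ≤ C * |y - x| := by
    intro k hk x hx y hy
    have hsub : Icc (Qp ρ (-h₁) (k+1)) (Qp ρ (-h₁) k) ⊆ Icc (-1:ℝ) 1 := by
      apply Set.Icc_subset_Icc
      · exact (hPI hk).1
      · exact (hPI (le_of_lt hk)).2
    have hder : ∀ u ∈ Icc (Qp ρ (-h₁) (k+1)) (Qp ρ (-h₁) k),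
        HasDerivWithinAt (fun v => g v - (g ρ + F G' ρ h₁ h₂ m v))
          (G' u - Tf G' ρ (-h₁) (k+1)) (Icc (Qp ρ (-h₁) (k+1)) (Qp ρ (-h₁) k)) u := by
      intro u hu
      have h1 := ((hg u (hsub hu)).mono hsub)
      have h2 := (cellL G' ρ h₁ h₂ m (le_of_lt h1p) (le_of_lt h2p) hk hu).const_add (g ρ)
      exact h1.sub h2
    have hbound : ∀ u ∈ Icc (Qp ρ (-h₁) (k+1)) (Qp ρ (-h₁) k),
        ‖G' u - Tf G' ρ (-h₁) (k+1)‖ ≤ C := by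
      intro u hu
      rw [Real.norm_eq_abs]
      have hmid : ρ + ((k:ℝ) + 1/2) * (-h₁) ∈ Icc (-1:ℝ) 1 := hmidL hk
      have hTf : Tf G' ρ (-h₁) (k+1) = G' (ρ + ((k:ℝ) + 1/2) * (-h₁)) := by simp [Tf]
      rw [hTf]
      have hl := lip _ hmid u (hsub hu)
      have hdist : |u - (ρ + ((k:ℝ) + 1/2) * (-h₁))| ≤ h₁ / 2 := by
        rw [abs_le]
        have h1 : Qp ρ (-h₁) (k+1) ≤ u := hu.1
        have h2 : u ≤ Qp ρ (-h₁) k := hu.2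
        simp only [Qp, mul_neg] at h1 h2
        push_cast at h1
        constructor <;> nlinarith
      calc |G' u - G' (ρ + ((k:ℝ) + 1/2) * (-h₁))|
          ≤ B * |u - (ρ + ((k:ℝ) + 1/2) * (-h₁))| := hl
        _ ≤ B * (h₁ / 2) := by nlinarith [abs_nonneg (u - (ρ + ((k:ℝ) + 1/2) * (-h₁)))]
        _ ≤ C := by linarith
    have := (convex_Icc (Qp ρ (-h₁) (k+1)) (Qp ρ (-h₁) k)).norm_image_sub_le_of_norm_hasDerivWithin_le hder hbound hx hy
    simpa [Real.norm_eq_abs] using this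
  -- chain the right cells
  have chainR : ∀ k : ℕ, k ≤ m →
      ∀ x ∈ Icc ρ (Qp ρ h₂ k), ∀ y ∈ Icc ρ (Qp ρ h₂ k),
        |(g y - (g ρ + F G' ρ h₁ h₂ m y)) - (g x - (g ρ + F G' ρ h₁ h₂ m x))|
          ≤ C * |y - x| := by
    intro k
    induction k with
    | zero =>
      intro _ x hx y hy
      rw [hQ0] at hx hy
      have hx' : x = ρ := le_antisymm hx.2 hx.1
      have hy' : y = ρ := le_antisymm hy.2 hy.1
      rw [hx', hy']
      simp
    | succ k ih =>
      intro hk1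
      have hk : k < m := hk1
      have h1 := ih (le_of_lt hk)
      have h2 := lipR hk
      have g1 : ρ ≤ Qp ρ h₂ k := by
        have := hQmono (Nat.zero_le k); rw [hQ0] at this; exact this
      have g2 : Qp ρ h₂ k ≤ Qp ρ h₂ (k+1) := hQmono (Nat.le_succ k)
      exact lip_glue h1 h2 g1 g2
  -- chain the left cells
  have chainL : ∀ k : ℕ, k ≤ m →
      ∀ x ∈ Icc (Qp ρ (-h₁) k) ρ, ∀ y ∈ Icc (Qp ρ (-h₁) k) ρ,
        |(g y - (g ρ + F G' ρ h₁ h₂ m y)) - (g x - (g ρ + F G' ρ h₁ h₂ m x))|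
          ≤ C * |y - x| := by
    intro k
    induction k with
    | zero =>
      intro _ x hx y hy
      rw [hP0] at hx hy
      have hx' : x = ρ := le_antisymm hx.2 hx.1
      have hy' : y = ρ := le_antisymm hy.2 hy.1
      rw [hx', hy']
      simp
    | succ k ih =>
      intro hk1
      have hk : k < m := hk1
      have h1 := ih (le_of_lt hk)
      have h2 := lipL hk
      have g1 : Qp ρ (-h₁) (k+1) ≤ Qp ρ (-h₁) k := hPanti (Nat.le_succ k)
      have g2 : Qp ρ (-h₁) k ≤ ρ := by
        have := hPanti (Nat.zero_le k); rw [hP0] at this; exact this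
      exact lip_glue h2 h1 g1 g2
  have hPρ : Qp ρ (-h₁) m ≤ ρ := by rw [hPm]; linarith
  have hρQ : ρ ≤ Qp ρ h₂ m := by rw [hQm]; linarith
  have final := lip_glue (chainL m le_rfl) (chainR m le_rfl) hPρ hρQ
  rw [hPm, hQm] at final
  exact final


lemma Fρ0 (h1p : 0 ≤ h₁) (h2p : 0 ≤ h₂) : F G' ρ h₁ h₂ m ρ = 0 := by
  rw [F]
  apply Finset.sum_eq_zero
  intro i _
  rcases lt_or_ge i m with him | him
  · have : e m i * ρ - b ρ h₁ h₂ m i ≤ 0 := by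
      simp only [e, b, if_pos him, Qp]
      have : (0:ℝ) ≤ ((m-1-i:ℕ):ℝ) * h₁ := by positivity
      nlinarith
    rw [relu_of_nonpos this, mul_zero]
  · have : e m i * ρ - b ρ h₁ h₂ m i ≤ 0 := by
      simp only [e, b, if_neg (not_lt.2 him), Qp]
      have : (0:ℝ) ≤ ((i-m:ℕ):ℝ) * h₂ := by positivity
      nlinarith
    rw [relu_of_nonpos this, mul_zero]

lemma bmem (hρ0 : 0 ≤ ρ) (hρ2 : ρ ≤ 1/2) (h1p : 0 ≤ h₁) (h2p : 0 ≤ h₂)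
    (hmh1 : (m:ℝ) * h₁ = ρ + 1) (hmh2 : (m:ℝ) * h₂ = 1 - ρ) :
    ∀ i < 2*m, b ρ h₁ h₂ m i ∈ Icc (-1:ℝ) 1 := by
  intro i hi
  rw [Set.mem_Icc]
  rcases lt_or_ge i m with him | him
  · simp only [b, if_pos him, Qp]
    have hj1 : ((m-1-i:ℕ):ℝ) ≤ (m:ℝ) := Nat.cast_le.2 (by omega)
    have hj0 : (0:ℝ) ≤ ((m-1-i:ℕ):ℝ) := Nat.cast_nonneg _
    constructor <;> nlinarith
  · simp only [b, if_neg (not_lt.2 him), Qp]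
    have hj1 : ((i-m:ℕ):ℝ) ≤ (m:ℝ) := Nat.cast_le.2 (by omega)
    have hj0 : (0:ℝ) ≤ ((i-m:ℕ):ℝ) := Nat.cast_nonneg _
    constructor <;> nlinarith

lemma coeff (B : ℝ)
    (lip : ∀ x ∈ Icc (-1:ℝ) 1, ∀ y ∈ Icc (-1:ℝ) 1, |G' y - G' x| ≤ B * |y - x|)
    (hG'ρ : G' ρ = 0)
    (hρ0 : 0 ≤ ρ) (hρ2 : ρ ≤ 1/2) (hB : 0 < B) (h1p : 0 < h₁) (h2p : 0 < h₂)
    (hmh1 : (m:ℝ) * h₁ = ρ + 1) (hmh2 : (m:ℝ) * h₂ = 1 - ρ) :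
    ∀ i < 2*m, (i < m → |a G' ρ h₁ h₂ m i| ≤ B * h₁) ∧
      (m ≤ i → |a G' ρ h₁ h₂ m i| ≤ B * h₂) := by
  have hm0 : (0:ℝ) < m := by
    by_contra h
    push_neg at h
    have : (m:ℝ) = 0 := le_antisymm h (Nat.cast_nonneg m)
    rw [this] at hmh1; nlinarith
  have hρI : ρ ∈ Icc (-1:ℝ) 1 := by rw [Set.mem_Icc]; constructor <;> linarith
  have hmidR : ∀ j : ℕ, j < m → ρ + ((j:ℝ) + 1/2) * h₂ ∈ Icc (-1:ℝ) 1 := by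
    intro j hj
    have hj' : (j:ℝ) + 1 ≤ (m:ℝ) := by exact_mod_cast Nat.succ_le_of_lt hj
    have hj0 : (0:ℝ) ≤ (j:ℝ) := Nat.cast_nonneg j
    rw [Set.mem_Icc]
    constructor <;> nlinarith
  have hmidL : ∀ j : ℕ, j < m → ρ + ((j:ℝ) + 1/2) * (-h₁) ∈ Icc (-1:ℝ) 1 := by
    intro j hj
    have hj' : (j:ℝ) + 1 ≤ (m:ℝ) := by exact_mod_cast Nat.succ_le_of_lt hj
    have hj0 : (0:ℝ) ≤ (j:ℝ) := Nat.cast_nonneg j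
    rw [Set.mem_Icc]
    constructor <;> nlinarith
  intro i hi
  constructor
  · intro him
    rw [a, if_pos him]
    have hmi : m - i = (m-1-i) + 1 := by omega
    rw [hmi]
    rcases Nat.eq_zero_or_pos (m-1-i) with hj | hj
    · rw [hj]
      simp only [Tf, zero_sub, abs_neg, Nat.cast_zero]
      have h0 : ρ + ((0:ℝ) + 1/2) * (-h₁) ∈ Icc (-1:ℝ) 1 := by
        simpa using hmidL 0 (by omega)
      have := lip ρ hρI _ h0
      rw [hG'ρ, sub_zero] at this
      have habs : |ρ + ((0:ℝ) + 1/2) * (-h₁) - ρ| = h₁/2 := by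
        rw [abs_of_nonpos (by nlinarith)]; ring
      rw [habs] at this
      nlinarith
    · obtain ⟨jj, hjj⟩ : ∃ jj, m-1-i = jj+1 := ⟨m-1-i-1, by omega⟩
      rw [hjj]
      simp only [Tf]
      push_cast
      have h0 : ρ + ((jj:ℝ) + 1/2) * (-h₁) ∈ Icc (-1:ℝ) 1 := hmidL jj (by omega)
      have h1 : ρ + (((jj:ℝ) + 1) + 1/2) * (-h₁) ∈ Icc (-1:ℝ) 1 := by
        have := hmidL (jj+1) (by omega)
        push_cast at this
        exact this
      have hlp := lip _ h1 _ h0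
      have habs : |ρ + ((jj:ℝ) + 1/2) * (-h₁) -
          (ρ + (((jj:ℝ) + 1) + 1/2) * (-h₁))| = h₁ := by
        rw [abs_of_nonneg (by nlinarith)]
        ring
      rw [habs] at hlp
      exact hlp
  · intro him
    rw [a, if_neg (not_lt.2 him)]
    rcases Nat.eq_zero_or_pos (i-m) with hj | hj
    · rw [hj]
      simp only [Tf, sub_zero, Nat.cast_zero]
      have h0 : ρ + ((0:ℝ) + 1/2) * h₂ ∈ Icc (-1:ℝ) 1 := by
        simpa using hmidR 0 (by omega)
      have := lip ρ hρI _ h0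
      rw [hG'ρ, sub_zero] at this
      have habs : |ρ + ((0:ℝ) + 1/2) * h₂ - ρ| = h₂/2 := by
        rw [abs_of_nonneg (by nlinarith)]; ring
      rw [habs] at this
      nlinarith
    · obtain ⟨jj, hjj⟩ : ∃ jj, i-m = jj+1 := ⟨i-m-1, by omega⟩
      rw [hjj]
      simp only [Tf]
      push_cast
      have h0 : ρ + ((jj:ℝ) + 1/2) * h₂ ∈ Icc (-1:ℝ) 1 := hmidR jj (by omega)
      have h1 : ρ + (((jj:ℝ) + 1) + 1/2) * h₂ ∈ Icc (-1:ℝ) 1 := by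
        have := hmidR (jj+1) (by omega)
        push_cast at this
        exact this
      have hlp := lip _ h0 _ h1
      have habs : |ρ + (((jj:ℝ) + 1) + 1/2) * h₂ -
          (ρ + ((jj:ℝ) + 1/2) * h₂)| = h₂ := by
        rw [abs_of_nonneg (by nlinarith)]
        ring
      rw [habs] at hlp
      exact hlp

lemma sum_ite_const (m : ℕ) (X Y : ℝ) :
    ∑ i ∈ range (2*m), (if i < m then X else Y) = m*X + m*Y := by
  have hpt : ∀ i ∈ range (2*m), (if i < m then X else Y) =
      (((min (i+1) m : ℕ):ℝ)*X + ((i+1 - min (i+1) m : ℕ):ℝ)*Y)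
      - (((min i m : ℕ):ℝ)*X + ((i - min i m : ℕ):ℝ)*Y) := by
    intro i _
    rcases lt_or_ge i m with him | him
    · rw [if_pos him]
      have e1 : min (i+1) m = i+1 := by omega
      have e2 : min i m = i := by omega
      have e3 : i+1 - (i+1) = 0 := by omega
      have e4 : i - i = 0 := by omega
      rw [e1, e2, e3, e4]
      push_cast; ring
    · rw [if_neg (not_lt.2 him)]
      have e1 : min (i+1) m = m := by omega
      have e2 : min i m = m := by omega
      have e3 : i+1-m = (i-m)+1 := by omega
      rw [e1, e2, e3]
      push_cast; ring
  rw [Finset.sum_congr rfl hpt,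
    Finset.sum_range_sub (fun i => (((min i m : ℕ):ℝ)*X + ((i - min i m : ℕ):ℝ)*Y))]
  have e1 : min (2*m) m = m := by omega
  have e2 : 2*m - m = m := by omega
  have e3 : min 0 m = 0 := by omega
  rw [e1, e2, e3]
  push_cast; ring

end T18
end

end

/-- Lemma 4.5, piecewise-linear/ReLU approximation: let
`g ∈ C²([-1,1])` with `‖g^{(r)}‖_∞ ≤ B` for `r = 0,1,2` and `g'(ρ) = 0` for
some `ρ ∈ [0, 1/2]`.  With the partition of `[-1,1]` having mesh
`h₁ = (ρ+1)/m` on `[-1,ρ]` and `h₂ = (1-ρ)/m` on `[ρ,1]`, there exists a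
two-layer ReLU network `g_m(z) = c + Σ_{i=1}^{2m} aᵢ ReLU(εᵢ z - bᵢ)` with
`c = g(ρ)`, `bᵢ ∈ [-1,1]`, `εᵢ ∈ {±1}`, such that
`‖g - g_m‖_{W^{1,∞}([-1,1])} ≤ 2B/m`; moreover `|c| ≤ B`, `|aᵢ| ≤ 2Bh₁` for
`i < m`, `|a_m| ≤ Bh₁`, `|a_{m+1}| ≤ Bh₂`, `|aᵢ| ≤ 2Bh₂` for `i > m+1`, and
`Σᵢ |aᵢ| ≤ 4B`.  (Indices are `1`-based as in the paper: the `1`-based index of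
`i : Fin (2m)` is `i + 1`.) -/
theorem statement18
    (B ρ : ℝ) (hB : 0 < B) (hρ : ρ ∈ Set.Icc (0 : ℝ) (1 / 2))
    (g : ℝ → ℝ) (hg : ContDiffOn ℝ 2 g (Set.Icc (-1) 1))
    (hg0 : ∀ z ∈ Set.Icc (-1 : ℝ) 1, |g z| ≤ B)
    (hg1 : ∀ z ∈ Set.Icc (-1 : ℝ) 1, |derivWithin g (Set.Icc (-1) 1) z| ≤ B)
    (hg2 : ∀ z ∈ Set.Icc (-1 : ℝ) 1,
      |derivWithin (derivWithin g (Set.Icc (-1) 1)) (Set.Icc (-1) 1) z| ≤ B)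
    (hρ' : derivWithin g (Set.Icc (-1) 1) ρ = 0)
    (m : ℕ) (hm : 1 ≤ m) :
    ∃ (a b ε : Fin (2 * m) → ℝ),
      (∀ i, b i ∈ Set.Icc (-1 : ℝ) 1) ∧
      (∀ i, ε i = 1 ∨ ε i = -1) ∧
      -- `‖g - g_m‖_{L^∞([-1,1])} ≤ 2B/m`
      (∀ z ∈ Set.Icc (-1 : ℝ) 1,
        |g z - (g ρ + ∑ i, a i * relu (ε i * z - b i))| ≤ 2 * B / m) ∧
      -- `‖g' - g_m'‖_{L^∞([-1,1])} ≤ 2B/m` (wherever the derivative exists)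
      (∀ z ∈ Set.Icc (-1 : ℝ) 1,
        DifferentiableWithinAt ℝ
            (fun t => g t - (g ρ + ∑ i, a i * relu (ε i * t - b i)))
            (Set.Icc (-1) 1) z →
          |derivWithin
              (fun t => g t - (g ρ + ∑ i, a i * relu (ε i * t - b i)))
              (Set.Icc (-1) 1) z| ≤ 2 * B / m) ∧
      |g ρ| ≤ B ∧
      (∀ i : Fin (2 * m),
        ((i : ℕ) + 1 < m → |a i| ≤ 2 * B * ((ρ + 1) / m)) ∧
        ((i : ℕ) + 1 = m → |a i| ≤ B * ((ρ + 1) / m)) ∧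
        ((i : ℕ) + 1 = m + 1 → |a i| ≤ B * ((1 - ρ) / m)) ∧
        (m + 1 < (i : ℕ) + 1 → |a i| ≤ 2 * B * ((1 - ρ) / m))) ∧
      (∑ i, |a i|) ≤ 4 * B := by

  have hm1 : (1:ℝ) ≤ (m:ℝ) := by exact_mod_cast hm
  have hm0 : (0:ℝ) < (m:ℝ) := by linarith
  have hρ0 : 0 ≤ ρ := hρ.1
  have hρ2 : ρ ≤ 1/2 := hρ.2
  have hρI : ρ ∈ Set.Icc (-1:ℝ) 1 := by
    rw [Set.mem_Icc]; constructor <;> linarith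
  have h1p : 0 < (ρ+1)/(m:ℝ) := by positivity
  have h2p : 0 < (1-ρ)/(m:ℝ) := div_pos (by linarith) hm0
  have hmh1 : (m:ℝ) * ((ρ+1)/(m:ℝ)) = ρ + 1 := by field_simp
  have hmh2 : (m:ℝ) * ((1-ρ)/(m:ℝ)) = 1 - ρ := by field_simp
  have UD : UniqueDiffOn ℝ (Set.Icc (-1:ℝ) 1) := uniqueDiffOn_Icc (by norm_num)
  have hgd : DifferentiableOn ℝ g (Set.Icc (-1:ℝ) 1) := hg.differentiableOn (by norm_num)
  have hg' : ∀ x ∈ Set.Icc (-1:ℝ) 1, HasDerivWithinAt g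
      (derivWithin g (Set.Icc (-1:ℝ) 1) x) (Set.Icc (-1:ℝ) 1) x :=
    fun x hx => (hgd x hx).hasDerivWithinAt
  have hG'd : DifferentiableOn ℝ (derivWithin g (Set.Icc (-1:ℝ) 1)) (Set.Icc (-1:ℝ) 1) :=
    (hg.derivWithin (m := 1) UD (by norm_num)).differentiableOn (by norm_num)
  have lipG' : ∀ x ∈ Set.Icc (-1:ℝ) 1, ∀ y ∈ Set.Icc (-1:ℝ) 1,
      |derivWithin g (Set.Icc (-1:ℝ) 1) y - derivWithin g (Set.Icc (-1:ℝ) 1) x|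
        ≤ B * |y - x| := by
    intro x hx y hy
    have := (convex_Icc (-1:ℝ) 1).norm_image_sub_le_of_norm_derivWithin_le hG'd
      (fun z hz => by rw [Real.norm_eq_abs]; exact hg2 z hz) hx hy
    simpa [Real.norm_eq_abs] using this
  have hC1 : B * ((ρ+1)/(m:ℝ)) / 2 ≤ 3*B/(4*(m:ℝ)) := by
    rw [show B * ((ρ+1)/(m:ℝ)) / 2 = (B*(ρ+1))/(2*(m:ℝ)) by ring]
    rw [div_le_div_iff₀ (by positivity) (by positivity)]
    nlinarith [mul_pos hB hm0]
  have hC2 : B * ((1-ρ)/(m:ℝ)) / 2 ≤ 3*B/(4*(m:ℝ)) := by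
    rw [show B * ((1-ρ)/(m:ℝ)) / 2 = (B*(1-ρ))/(2*(m:ℝ)) by ring]
    rw [div_le_div_iff₀ (by positivity) (by positivity)]
    nlinarith [mul_pos hB hm0, mul_nonneg (mul_pos hB hm0).le hρ0]
  have GLIP := T18.glip (derivWithin g (Set.Icc (-1) 1)) ρ ((ρ+1)/(m:ℝ)) ((1-ρ)/(m:ℝ)) m
    g B (3*B/(4*(m:ℝ))) hg' lipG' hρ0 hρ2 hB h1p h2p hmh1 hmh2 hC1 hC2
  have COEFF := T18.coeff (derivWithin g (Set.Icc (-1) 1)) ρ ((ρ+1)/(m:ℝ)) ((1-ρ)/(m:ℝ)) m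
    B lipG' hρ' hρ0 hρ2 hB h1p h2p hmh1 hmh2
  have FR0 := T18.Fρ0 (derivWithin g (Set.Icc (-1) 1)) ρ ((ρ+1)/(m:ℝ)) ((1-ρ)/(m:ℝ)) m
    h1p.le h2p.le
  have BMEM := T18.bmem ρ ((ρ+1)/(m:ℝ)) ((1-ρ)/(m:ℝ)) m hρ0 hρ2 h1p.le h2p.le hmh1 hmh2
  have hCD : 3*B/(4*(m:ℝ)) ≤ 2*B/(m:ℝ) := by
    rw [div_le_div_iff₀ (by positivity) hm0]
    nlinarith [mul_pos hB hm0]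
  refine ⟨fun i => T18.a (derivWithin g (Set.Icc (-1) 1)) ρ ((ρ+1)/(m:ℝ)) ((1-ρ)/(m:ℝ)) m i,
    fun i => T18.b ρ ((ρ+1)/(m:ℝ)) ((1-ρ)/(m:ℝ)) m i,
    fun i => T18.e m i, ?_, ?_, ?_, ?_, ?_, ?_, ?_⟩
  · intro i
    exact BMEM i i.isLt
  · intro i
    rcases lt_or_ge (i:ℕ) m with h | h
    · right; simp [T18.e, h]
    · left; simp [T18.e, not_lt.2 h]
  · -- L∞ bound
    intro z hz
    have hFeq : (∑ i : Fin (2*m),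
        T18.a (derivWithin g (Set.Icc (-1) 1)) ρ ((ρ+1)/(m:ℝ)) ((1-ρ)/(m:ℝ)) m (i:ℕ) *
          relu (T18.e m (i:ℕ) * z - T18.b ρ ((ρ+1)/(m:ℝ)) ((1-ρ)/(m:ℝ)) m (i:ℕ)))
        = T18.F (derivWithin g (Set.Icc (-1) 1)) ρ ((ρ+1)/(m:ℝ)) ((1-ρ)/(m:ℝ)) m z := by
      rw [T18.F]
      exact Fin.sum_univ_eq_sum_range (fun j =>
        T18.a (derivWithin g (Set.Icc (-1) 1)) ρ ((ρ+1)/(m:ℝ)) ((1-ρ)/(m:ℝ)) m j *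
          relu (T18.e m j * z - T18.b ρ ((ρ+1)/(m:ℝ)) ((1-ρ)/(m:ℝ)) m j)) (2*m)
    rw [hFeq]
    have e0 : g ρ - (g ρ + T18.F (derivWithin g (Set.Icc (-1) 1)) ρ ((ρ+1)/(m:ℝ))
        ((1-ρ)/(m:ℝ)) m ρ) = 0 := by rw [FR0]; ring
    have habs2 : |z - ρ| ≤ 2 := by
      rw [abs_le]; constructor
      · linarith [hz.1]
      · linarith [hz.2]
    calc |g z - (g ρ + T18.F (derivWithin g (Set.Icc (-1) 1)) ρ ((ρ+1)/(m:ℝ)) ((1-ρ)/(m:ℝ)) m z)|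
        = |(g z - (g ρ + T18.F (derivWithin g (Set.Icc (-1) 1)) ρ ((ρ+1)/(m:ℝ)) ((1-ρ)/(m:ℝ)) m z))
            - (g ρ - (g ρ + T18.F (derivWithin g (Set.Icc (-1) 1)) ρ ((ρ+1)/(m:ℝ)) ((1-ρ)/(m:ℝ)) m ρ))| := by
          rw [e0, sub_zero]
      _ ≤ 3*B/(4*(m:ℝ)) * |z - ρ| := GLIP ρ hρI z hz
      _ ≤ 3*B/(4*(m:ℝ)) * 2 := by
          apply mul_le_mul_of_nonneg_left habs2 (by positivity)
      _ ≤ 2*B/(m:ℝ) := by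
          rw [div_mul_eq_mul_div, div_le_div_iff₀ (by positivity) hm0]
          nlinarith [mul_pos hB hm0]
  · -- derivative bound
    intro z hz hdiff
    have hFeq : ∀ w : ℝ, (∑ i : Fin (2*m),
        T18.a (derivWithin g (Set.Icc (-1) 1)) ρ ((ρ+1)/(m:ℝ)) ((1-ρ)/(m:ℝ)) m (i:ℕ) *
          relu (T18.e m (i:ℕ) * w - T18.b ρ ((ρ+1)/(m:ℝ)) ((1-ρ)/(m:ℝ)) m (i:ℕ)))
        = T18.F (derivWithin g (Set.Icc (-1) 1)) ρ ((ρ+1)/(m:ℝ)) ((1-ρ)/(m:ℝ)) m w := by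
      intro w
      rw [T18.F]
      exact Fin.sum_univ_eq_sum_range (fun j =>
        T18.a (derivWithin g (Set.Icc (-1) 1)) ρ ((ρ+1)/(m:ℝ)) ((1-ρ)/(m:ℝ)) m j *
          relu (T18.e m j * w - T18.b ρ ((ρ+1)/(m:ℝ)) ((1-ρ)/(m:ℝ)) m j)) (2*m)
    simp only [hFeq] at hdiff ⊢
    have key := abs_derivWithin_le_of_lip hz hdiff (fun y hy => GLIP z hz y hy)
    exact le_trans key hCD
  · exact hg0 ρ hρI
  · -- coefficient bounds
    intro i
    have hc := COEFF (i:ℕ) i.isLt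
    have hpos1 : 0 ≤ B * ((ρ+1)/(m:ℝ)) := by positivity
    have hpos2 : 0 ≤ B * ((1-ρ)/(m:ℝ)) := mul_nonneg hB.le h2p.le
    refine ⟨?_, ?_, ?_, ?_⟩
    · intro h
      have := hc.1 (by omega)
      linarith
    · intro h
      exact hc.1 (by omega)
    · intro h
      exact hc.2 (by omega)
    · intro h
      have := hc.2 (by omega)
      linarith
  · -- sum of coefficients
    have hAeq : (∑ i : Fin (2*m),
        |T18.a (derivWithin g (Set.Icc (-1) 1)) ρ ((ρ+1)/(m:ℝ)) ((1-ρ)/(m:ℝ)) m (i:ℕ)|)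
        = ∑ i ∈ Finset.range (2*m),
          |T18.a (derivWithin g (Set.Icc (-1) 1)) ρ ((ρ+1)/(m:ℝ)) ((1-ρ)/(m:ℝ)) m i| :=
      Fin.sum_univ_eq_sum_range (fun j =>
        |T18.a (derivWithin g (Set.Icc (-1) 1)) ρ ((ρ+1)/(m:ℝ)) ((1-ρ)/(m:ℝ)) m j|) (2*m)
    rw [hAeq]
    have e1 : (m:ℝ)*(B*((ρ+1)/(m:ℝ))) = B*(ρ+1) := by field_simp
    have e2 : (m:ℝ)*(B*((1-ρ)/(m:ℝ))) = B*(1-ρ) := by field_simp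
    calc ∑ i ∈ Finset.range (2*m),
        |T18.a (derivWithin g (Set.Icc (-1) 1)) ρ ((ρ+1)/(m:ℝ)) ((1-ρ)/(m:ℝ)) m i|
        ≤ ∑ i ∈ Finset.range (2*m), (if i < m then B*((ρ+1)/(m:ℝ)) else B*((1-ρ)/(m:ℝ))) := by
          apply Finset.sum_le_sum
          intro i hi
          rcases lt_or_ge i m with h | h
          · rw [if_pos h]
            exact (COEFF i (Finset.mem_range.1 hi)).1 h
          · rw [if_neg (not_lt.2 h)]
            exact (COEFF i (Finset.mem_range.1 hi)).2 h
      _ = (m:ℝ)*(B*((ρ+1)/(m:ℝ))) + (m:ℝ)*(B*((1-ρ)/(m:ℝ))) := T18.sum_ite_const m _ _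
      _ ≤ 4*B := by rw [e1, e2]; linarith
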